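/- arXiv:math/9406209 — 6 statements merged into one kernel-verified Lean document; each statement's English description precedes it below -/
import Mathlib

section
/- Let $X$ be a Banach lattice and let $x, y \in X$. Then the elements $x - S_y(x)$ and $y - S_x(y)$ are disjoint, i.e. $|x - S_y(x)| \wedge |y - S_x(y)| = 0$. -/
/-- `S u x = x⁺ ⊓ |u| - x⁻ ⊓ |u|` where `x⁺ = x ⊔ 0` and `x⁻ = (-x) ⊔ 0`. -/
def latticeTruncation {X : Type*} [Lattice X] [AddCommGroup X] (u x : X) : X :=
  (x ⊔ 0) ⊓ |u| - ((-x) ⊔ 0) ⊓ |u|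

lemma abs_sub_latticeTruncation_le {X : Type*} [Lattice X] [AddCommGroup X]
    [CovariantClass X X (· + ·) (· ≤ ·)] (x y : X) :
    |x - latticeTruncation y x| ≤ (|x| - |y|) ⊔ 0 := by
  set a := (x ⊔ 0) - (x ⊔ 0) ⊓ |y| with ha
  set b := ((-x) ⊔ 0) - ((-x) ⊔ 0) ⊓ |y| with hb
  have hxa : x - latticeTruncation y x = a - b := by
    rw [latticeTruncation, ha, hb]
    have hx : x = (x ⊔ 0) - ((-x) ⊔ 0) := by
      have := posPart_sub_negPart x
      rw [posPart_def, negPart_def] at this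
      exact this.symm
    nth_rewrite 1 [hx]; abel
  have ha0 : 0 ≤ a := sub_nonneg.mpr inf_le_left
  have hb0 : 0 ≤ b := sub_nonneg.mpr inf_le_left
  have haeq : a = (0 : X) ⊔ ((x ⊔ 0) - |y|) := by
    rw [ha, sub_inf, sub_self]
  have hbeq : b = (0 : X) ⊔ (((-x) ⊔ 0) - |y|) := by
    rw [hb, sub_inf, sub_self]
  have hx1 : x ⊔ 0 ≤ |x| := sup_le (le_abs_self x) (abs_nonneg x)
  have hx2 : (-x) ⊔ 0 ≤ |x| := sup_le (neg_le_abs x) (abs_nonneg x)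
  have hale : a ≤ (|x| - |y|) ⊔ 0 := by
    rw [haeq]
    exact sup_le le_sup_right ((sub_le_sub_right hx1 _).trans le_sup_left)
  have hble : b ≤ (|x| - |y|) ⊔ 0 := by
    rw [hbeq]
    exact sup_le le_sup_right ((sub_le_sub_right hx2 _).trans le_sup_left)
  rw [hxa]
  have habs : |a - b| = (a - b) ⊔ (b - a) := by
    rw [abs, neg_sub]
  rw [habs]
  exact sup_le ((sub_le_self a hb0).trans hale) ((sub_le_self b ha0).trans hble)

/-- In a Banach lattice `X`, for all `x y : X`, the elements `x - S_y(x)` and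
`y - S_x(y)` are disjoint. -/
theorem disjoint_sub_latticeTruncation {X : Type*} [NormedAddCommGroup X] [Lattice X]
    [HasSolidNorm X] [IsOrderedAddMonoid X]
    [CompleteSpace X] (x y : X) :
    |x - latticeTruncation y x| ⊓ |y - latticeTruncation x y| = 0 := by
  apply le_antisymm
  · calc |x - latticeTruncation y x| ⊓ |y - latticeTruncation x y|
        ≤ ((|x| - |y|) ⊔ 0) ⊓ ((|y| - |x|) ⊔ 0) :=
          inf_le_inf (abs_sub_latticeTruncation_le x y) (abs_sub_latticeTruncation_le y x)
      _ = 0 := by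
          have := posPart_inf_negPart_eq_zero (|x| - |y|)
          simpa [posPart_def, negPart_def, neg_sub] using this
  · exact le_inf (abs_nonneg _) (abs_nonneg _)
end

section
/- Let $X$ be a lattice-ordered abelian group and $x, y \in X$. Then $y - S_x(y) = (y^+ - y^+ \wedge |x|) - (y^- - y^- \wedge |x|)$, both $y^+ - y^+ \wedge |x| \ge 0$ and $y^- - y^- \wedge |x| \ge 0$, and $(y^+ - y^+ \wedge |x|) \wedge (y^- - y^- \wedge |x|) = 0$. -/
/-- In a lattice-ordered abelian group `X`, for `x y : X`:
`y - S_x(y) = (y⁺ - y⁺ ⊓ |x|) - (y⁻ - y⁻ ⊓ |x|)`, both parts are nonnegative,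
and they are disjoint (their infimum is `0`). -/
theorem sub_latticeTruncation_decomposition {X : Type*} [Lattice X] [AddCommGroup X]
    [CovariantClass X X (· + ·) (· ≤ ·)] (x y : X) :
    y - latticeTruncation x y = ((y ⊔ 0) - (y ⊔ 0) ⊓ |x|) - (((-y) ⊔ 0) - ((-y) ⊔ 0) ⊓ |x|) ∧
    0 ≤ (y ⊔ 0) - (y ⊔ 0) ⊓ |x| ∧
    0 ≤ ((-y) ⊔ 0) - ((-y) ⊔ 0) ⊓ |x| ∧
    ((y ⊔ 0) - (y ⊔ 0) ⊓ |x|) ⊓ (((-y) ⊔ 0) - ((-y) ⊔ 0) ⊓ |x|) = 0 := by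
  have hy : (y ⊔ 0) - ((-y) ⊔ 0) = y := posPart_sub_negPart y
  have h1 : 0 ≤ (y ⊔ 0) - (y ⊔ 0) ⊓ |x| := by rw [sub_nonneg]; exact inf_le_left
  have h2 : 0 ≤ ((-y) ⊔ 0) - ((-y) ⊔ 0) ⊓ |x| := by rw [sub_nonneg]; exact inf_le_left
  refine ⟨?_, h1, h2, ?_⟩
  · unfold latticeTruncation
    nth_rewrite 1 [← hy]
    abel
  · refine le_antisymm ?_ (le_inf h1 h2)
    calc ((y ⊔ 0) - (y ⊔ 0) ⊓ |x|) ⊓ (((-y) ⊔ 0) - ((-y) ⊔ 0) ⊓ |x|)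
        ≤ (y ⊔ 0) ⊓ ((-y) ⊔ 0) := by
          gcongr
          · exact sub_le_self _ (le_inf le_sup_right (abs_nonneg x))
          · exact sub_le_self _ (le_inf le_sup_right (abs_nonneg x))
      _ = 0 := posPart_inf_negPart_eq_zero y
end

section
/- Let $X$ be a lattice-ordered abelian group and $x, y \in X$. Then $(y^+ - y^+ \wedge |x|) \wedge (x^+ - x^+ \wedge |y|) = 0$. -/
/-- In a lattice-ordered abelian group `X`, for `x y : X`:
`(y⁺ - y⁺ ⊓ |x|) ⊓ (x⁺ - x⁺ ⊓ |y|) = 0`, where `z⁺ = z ⊔ 0`. -/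
theorem inf_pos_parts_sub_eq_zero {X : Type*} [Lattice X] [AddCommGroup X]
    [CovariantClass X X (· + ·) (· ≤ ·)] (x y : X) :
    ((y ⊔ 0) - (y ⊔ 0) ⊓ |x|) ⊓ ((x ⊔ 0) - (x ⊔ 0) ⊓ |y|) = 0 := by
  set a := y ⊔ 0 with ha'
  set b := x ⊔ 0 with hb'
  have hb : b ≤ |x| := sup_le (le_abs_self x) (abs_nonneg x)
  have ha : a ≤ |y| := sup_le (le_abs_self y) (abs_nonneg y)
  apply le_antisymm
  · calc (a - a ⊓ |x|) ⊓ (b - b ⊓ |y|)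
        ≤ (a - a ⊓ b) ⊓ (b - b ⊓ a) := by
          gcongr
      _ = (a ⊓ b) - (a ⊓ b) := by rw [inf_comm b a, ← inf_sub]
      _ = 0 := sub_self _
  · exact le_inf (by simp [sub_nonneg]) (by simp [sub_nonneg])
end

section
/- Let $X$ be a lattice-ordered abelian group and $x, y \in X$. Then $(y^+ - y^+ \wedge |x|) \wedge (x^- - x^- \wedge |y|) = 0$. -/
/-- In a lattice-ordered abelian group `X`, for `x y : X`:
`(y⁺ - y⁺ ⊓ |x|) ⊓ (x⁻ - x⁻ ⊓ |y|) = 0`, where `z⁺ = z ⊔ 0` and `z⁻ = (-z) ⊔ 0`. -/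
theorem inf_pos_part_neg_part_sub_eq_zero {X : Type*} [Lattice X] [AddCommGroup X]
    [CovariantClass X X (· + ·) (· ≤ ·)] (x y : X) :
    ((y ⊔ 0) - (y ⊔ 0) ⊓ |x|) ⊓ (((-x) ⊔ 0) - ((-x) ⊔ 0) ⊓ |y|) = 0 := by
  have hy : (y ⊔ 0) - (y ⊔ 0) ⊓ |x| = ((y ⊔ 0) - |x|) ⊔ 0 := by
    rw [sub_inf, sub_self, sup_comm]
  have hx : ((-x) ⊔ 0) - ((-x) ⊔ 0) ⊓ |y| = (((-x) ⊔ 0) - |y|) ⊔ 0 := by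
    rw [sub_inf, sub_self, sup_comm]
  rw [hy, hx]
  apply le_antisymm _ (le_inf le_sup_right le_sup_right)
  have h1 : ((y ⊔ 0) - |x|) ⊔ 0 ≤ (|y| - |x|) ⊔ 0 :=
    sup_le_sup_right (sub_le_sub_right (sup_le (le_abs_self y) (abs_nonneg y)) _) 0
  have h2 : (((-x) ⊔ 0) - |y|) ⊔ 0 ≤ (|x| - |y|) ⊔ 0 :=
    sup_le_sup_right (sub_le_sub_right (sup_le (neg_le_abs x) (abs_nonneg x)) _) 0
  calc (((y ⊔ 0) - |x|) ⊔ 0) ⊓ ((((-x) ⊔ 0) - |y|) ⊔ 0)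
      ≤ ((|y| - |x|) ⊔ 0) ⊓ ((|x| - |y|) ⊔ 0) := inf_le_inf h1 h2
    _ = 0 := by
        have := posPart_inf_negPart_eq_zero (|y| - |x|)
        simpa [posPart, negPart, neg_sub] using this
end

section
/- Let $X$ be a Banach lattice and suppose there is a constant $c$ with $0 < c < 2$ such that $c\,\|x + y\| \ge \|x\| + \|y\|$ for all disjoint $x, y \in X$. Then for every $n \in \mathbb{N}$ and every family $(x_i)_{1 \le i \le 2^n}$ of pairwise disjoint elements of $X$, $\inf_{1 \le i \le 2^n} \|x_i\| \le (c/2)^n \big\|\sum_{i=1}^{2^n} x_i\big\|$. -/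
section Aux

variable {X : Type*} [NormedAddCommGroup X] [Lattice X] [HasSolidNorm X] [IsOrderedAddMonoid X]

lemma aux_inf_add_le {a b z : X} (ha : 0 ≤ a) (hb : 0 ≤ b) (hz : 0 ≤ z) :
    (a + b) ⊓ z ≤ a ⊓ z + b ⊓ z := by
  have h : a ⊓ z + b ⊓ z = ((a + b) ⊓ (z + b)) ⊓ ((a + z) ⊓ (z + z)) := by
    rw [add_inf, inf_add, inf_add]
  rw [h]
  have h1 : z ≤ z + b := le_add_of_nonneg_right hb
  have h2 : z ≤ a + z := le_add_of_nonneg_left ha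
  have h3 : z ≤ z + z := le_add_of_nonneg_left hz
  refine le_inf (le_inf inf_le_left (inf_le_right.trans h1)) ?_
  exact le_inf (inf_le_right.trans h2) (inf_le_right.trans h3)

set_option maxHeartbeats 1000000 in
lemma aux_abs_sum_inf {ι : Type*} (s : Finset ι) (f : ι → X) (z : X)
    (h : ∀ i ∈ s, |f i| ⊓ |z| = 0) : |∑ i ∈ s, f i| ⊓ |z| = 0 := by
  classical
  induction s using Finset.induction_on with
  | empty => simp [inf_eq_left.mpr (abs_nonneg z)]
  | @insert a s hni ih =>
    rw [Finset.sum_insert hni]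
    refine le_antisymm ?_ (le_inf (abs_nonneg _) (abs_nonneg _))
    calc |f a + ∑ i ∈ s, f i| ⊓ |z| ≤ (|f a| + |∑ i ∈ s, f i|) ⊓ |z| :=
          inf_le_inf_right _ (abs_add_le _ _)
      _ ≤ |f a| ⊓ |z| + |∑ i ∈ s, f i| ⊓ |z| :=
          aux_inf_add_le (abs_nonneg _) (abs_nonneg _) (abs_nonneg _)
      _ = 0 := by
          rw [h a (Finset.mem_insert_self a s),
            ih (fun i hi => h i (Finset.mem_insert_of_mem hi)), add_zero]

end Aux

/-- Let `X` be a Banach lattice and `0 < c < 2` a constant such that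
`‖x‖ + ‖y‖ ≤ c‖x + y‖` for all disjoint `x, y`. Then for every `n` and every
pairwise disjoint family `(xᵢ)` of `2^n` elements,
`⨅ i, ‖xᵢ‖ ≤ (c/2)^n ‖∑ xᵢ‖`. -/
theorem iInf_norm_le_pow_mul_norm_sum {X : Type*} [NormedAddCommGroup X] [Lattice X]
    [HasSolidNorm X] [IsOrderedAddMonoid X]
    [CompleteSpace X] (c : ℝ) (hc0 : 0 < c) (hc2 : c < 2)
    (hest : ∀ x y : X, |x| ⊓ |y| = 0 → ‖x‖ + ‖y‖ ≤ c * ‖x + y‖) :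
    ∀ (n : ℕ) (x : Fin (2 ^ n) → X), (Pairwise fun i j => |x i| ⊓ |x j| = 0) →
      ⨅ i, ‖x i‖ ≤ (c / 2) ^ n * ‖∑ i, x i‖ := by
  intro n
  induction n with
  | zero =>
    intro x _
    simp [Fin.sum_univ_one, ciInf_unique]
  | succ n ih =>
    intro x hx
    have h2 : 2 ^ (n + 1) = 2 ^ n + 2 ^ n := by rw [pow_succ, mul_two]
    set m := 2 ^ n with hm
    set e : Fin (2 ^ (n + 1)) ≃ Fin (m + m) := finCongr h2 with he
    set y : Fin (m + m) → X := x ∘ e.symm with hy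
    have hsum : ∑ i, x i = ∑ i, y i := (Equiv.sum_comp e.symm x).symm
    set a : Fin m → X := fun i => y (Fin.castAdd m i) with ha
    set b : Fin m → X := fun i => y (Fin.natAdd m i) with hb
    have hsplit : ∑ i, y i = ∑ i, a i + ∑ i, b i := Fin.sum_univ_add y
    have hydis : Pairwise fun i j => |y i| ⊓ |y j| = 0 := by
      intro i j hij
      exact hx (fun h => hij (by simpa using congrArg e h))
    have hainj : Function.Injective (Fin.castAdd (n := m) m) := Fin.castAdd_injective _ _
    have hbinj : Function.Injective (Fin.natAdd m : Fin m → Fin (m + m)) := by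
      intro i j h
      have := congrArg Fin.val h
      simp only [Fin.coe_natAdd] at this
      exact Fin.ext (by omega)
    have hadis : Pairwise fun i j => |a i| ⊓ |a j| = 0 :=
      fun i j hij => hydis (fun h => hij (hainj h))
    have hbdis : Pairwise fun i j => |b i| ⊓ |b j| = 0 :=
      fun i j hij => hydis (fun h => hij (hbinj h))
    have hab : ∀ i j, |a i| ⊓ |b j| = 0 := by
      intro i j
      refine hydis (fun h => ?_)
      have : (Fin.castAdd m i : ℕ) = (Fin.natAdd m j : ℕ) := congrArg Fin.val h
      simp only [Fin.coe_castAdd, Fin.coe_natAdd] at this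
      omega
    -- disjointness of the two partial sums
    have hSdis : |∑ i, a i| ⊓ |∑ i, b i| = 0 := by
      refine aux_abs_sum_inf Finset.univ a (∑ i, b i) (fun i _ => ?_)
      rw [inf_comm]
      exact aux_abs_sum_inf Finset.univ b (a i) (fun j _ => by rw [inf_comm]; exact hab i j)
    have hA := ih a hadis
    have hB := ih b hbdis
    have hest' := hest _ _ hSdis
    haveI : NeZero m := ⟨pow_ne_zero n two_ne_zero⟩
    have hbdd : ∀ (k : ℕ) (f : Fin k → X), BddBelow (Set.range fun i => ‖f i‖) :=
      fun k f => ⟨0, by rintro r ⟨i, rfl⟩; exact norm_nonneg _⟩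
    have hxa : ⨅ i, ‖x i‖ ≤ ⨅ i, ‖a i‖ := by
      refine le_ciInf (fun i => ?_)
      have : a i = x (e.symm (Fin.castAdd m i)) := rfl
      rw [this]
      exact ciInf_le (hbdd _ x) _
    have hxb : ⨅ i, ‖x i‖ ≤ ⨅ i, ‖b i‖ := by
      refine le_ciInf (fun i => ?_)
      have : b i = x (e.symm (Fin.natAdd m i)) := rfl
      rw [this]
      exact ciInf_le (hbdd _ x) _
    have hpow : (0:ℝ) ≤ (c / 2) ^ n := by positivity
    have hhalf : min ‖∑ i, a i‖ ‖∑ i, b i‖ ≤ (c / 2) * ‖∑ i, x i‖ := by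
      have h1 : min ‖∑ i, a i‖ ‖∑ i, b i‖ ≤ (‖∑ i, a i‖ + ‖∑ i, b i‖) / 2 := by
        rcases le_total ‖∑ i, a i‖ ‖∑ i, b i‖ with h | h
        · rw [min_eq_left h]; linarith
        · rw [min_eq_right h]; linarith
      have h2 : ‖∑ i, a i‖ + ‖∑ i, b i‖ ≤ c * ‖∑ i, x i‖ := by
        rw [hsum, hsplit]; exact hest'
      linarith
    rcases le_total ‖∑ i, a i‖ ‖∑ i, b i‖ with h | h
    · calc ⨅ i, ‖x i‖ ≤ ⨅ i, ‖a i‖ := hxa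
        _ ≤ (c / 2) ^ n * ‖∑ i, a i‖ := hA
        _ = (c / 2) ^ n * min ‖∑ i, a i‖ ‖∑ i, b i‖ := by rw [min_eq_left h]
        _ ≤ (c / 2) ^ n * ((c / 2) * ‖∑ i, x i‖) := by
            exact mul_le_mul_of_nonneg_left hhalf hpow
        _ = (c / 2) ^ (n + 1) * ‖∑ i, x i‖ := by ring
    · calc ⨅ i, ‖x i‖ ≤ ⨅ i, ‖b i‖ := hxb
        _ ≤ (c / 2) ^ n * ‖∑ i, b i‖ := hB
        _ = (c / 2) ^ n * min ‖∑ i, a i‖ ‖∑ i, b i‖ := by rw [min_eq_right h]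
        _ ≤ (c / 2) ^ n * ((c / 2) * ‖∑ i, x i‖) := by
            exact mul_le_mul_of_nonneg_left hhalf hpow
        _ = (c / 2) ^ (n + 1) * ‖∑ i, x i‖ := by ring
end

section
/- Let $X$ be a Banach lattice and suppose there is a constant $c$ with $0 < c < 2$ such that $c\,\|x + y\| \ge \|x\| + \|y\|$ for all disjoint $x, y \in X$. Then, with $p = \frac{2\log 2}{\log(2/c)}$, there exists a constant $C > 0$ such that for every $m \ge 1$ and every family $(x_i)_{1 \le i \le m}$ of pairwise disjoint elements of $X$, $\min_{1 \le i \le m} \|x_i\| \le \frac{C}{m^{1/p}} \big\|\sum_{i=1}^{m} x_i\big\|$. -/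
section Lat
variable {X : Type*} [NormedAddCommGroup X] [Lattice X] [HasSolidNorm X]
  [IsOrderedAddMonoid X]

lemma aux_add_inf_le {a b c : X} (ha : 0 ≤ a) (hb : 0 ≤ b) (hc : 0 ≤ c) :
    (a + b) ⊓ c ≤ a ⊓ c + b ⊓ c := by
  have h : a ⊓ c + b ⊓ c = ((a + b) ⊓ (a + c)) ⊓ ((c + b) ⊓ (c + c)) := by
    rw [inf_add, add_inf, add_inf]
  rw [h]
  refine le_inf (le_inf inf_le_left ?_) (le_inf ?_ ?_)
  · exact inf_le_right.trans (le_add_of_nonneg_left ha)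
  · exact inf_le_right.trans (le_add_of_nonneg_right hb)
  · exact inf_le_right.trans (le_add_of_nonneg_left hc)

lemma aux_sum_inf_eq_zero {ι : Type*} {s : Finset ι} {a : ι → X} {c : X}
    (ha : ∀ i ∈ s, 0 ≤ a i) (hc : 0 ≤ c) (h : ∀ i ∈ s, a i ⊓ c = 0) :
    (∑ i ∈ s, a i) ⊓ c = 0 := by
  induction s using Finset.cons_induction with
  | empty => simpa using inf_of_le_left hc
  | cons i s his ih =>
    rw [Finset.sum_cons]
    refine le_antisymm ?_ (le_inf (add_nonneg (ha i (Finset.mem_cons_self _ _))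
      (Finset.sum_nonneg fun j hj => ha j (Finset.mem_cons_of_mem hj))) hc)
    calc (a i + ∑ j ∈ s, a j) ⊓ c ≤ a i ⊓ c + (∑ j ∈ s, a j) ⊓ c :=
          aux_add_inf_le (ha i (Finset.mem_cons_self _ _))
            (Finset.sum_nonneg fun j hj => ha j (Finset.mem_cons_of_mem hj)) hc
      _ = 0 := by
          rw [h i (Finset.mem_cons_self _ _),
            ih (fun j hj => ha j (Finset.mem_cons_of_mem hj))
              (fun j hj => h j (Finset.mem_cons_of_mem hj)), add_zero]

lemma aux_abs_sum_le {ι : Type*} (s : Finset ι) (x : ι → X) :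
    |∑ i ∈ s, x i| ≤ ∑ i ∈ s, |x i| := by
  induction s using Finset.cons_induction with
  | empty => simp
  | cons i s his ih =>
    rw [Finset.sum_cons, Finset.sum_cons]
    exact (abs_add_le _ _).trans (add_le_add_right ih _)

lemma aux_sums_disjoint {ι : Type*} {s t : Finset ι} {x : ι → X}
    (hx : ∀ i ∈ s, ∀ j ∈ t, |x i| ⊓ |x j| = 0) :
    |∑ i ∈ s, x i| ⊓ |∑ j ∈ t, x j| = 0 := by
  refine le_antisymm ?_ (le_inf (abs_nonneg _) (abs_nonneg _))
  calc |∑ i ∈ s, x i| ⊓ |∑ j ∈ t, x j| ≤ (∑ i ∈ s, |x i|) ⊓ (∑ j ∈ t, |x j|) :=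
        inf_le_inf (aux_abs_sum_le s x) (aux_abs_sum_le t x)
    _ = 0 := by
        refine aux_sum_inf_eq_zero (fun i _ => abs_nonneg _)
          (Finset.sum_nonneg fun j _ => abs_nonneg _) (fun i hi => ?_)
        rw [inf_comm]
        exact aux_sum_inf_eq_zero (fun j _ => abs_nonneg _) (abs_nonneg _)
          fun j hj => by rw [inf_comm]; exact hx i hi j hj

lemma aux_key {c : ℝ} (hc0 : 0 < c)
    (hest : ∀ x y : X, |x| ⊓ |y| = 0 → ‖x‖ + ‖y‖ ≤ c * ‖x + y‖)
    {ι : Type*} [DecidableEq ι] {x : ι → X} (hx : ∀ i j, i ≠ j → |x i| ⊓ |x j| = 0) :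
    ∀ (k : ℕ) (s : Finset ι), s.card = 2 ^ k →
      ∃ i ∈ s, ‖x i‖ ≤ (c / 2) ^ k * ‖∑ j ∈ s, x j‖ := by
  intro k
  induction k with
  | zero =>
    intro s hs
    rw [pow_zero, Finset.card_eq_one] at hs
    obtain ⟨i, rfl⟩ := hs
    exact ⟨i, Finset.mem_singleton_self i, by simp⟩
  | succ k ih =>
    intro s hs
    obtain ⟨t, hts, htcard⟩ : ∃ t ⊆ s, t.card = 2 ^ k := by
      apply Finset.exists_subset_card_eq
      rw [hs, pow_succ]
      nlinarith [pow_pos (by norm_num : 0 < 2) k]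
    have hucard : (s \ t).card = 2 ^ k := by
      rw [Finset.card_sdiff_of_subset hts, hs, htcard, pow_succ]; omega
    set a := ∑ j ∈ t, x j with ha
    set b := ∑ j ∈ s \ t, x j with hb
    have hab : a + b = ∑ j ∈ s, x j := by
      rw [ha, hb, ← Finset.sum_union (Finset.disjoint_sdiff)]
      congr 1
      exact Finset.union_sdiff_of_subset hts
    have hdisj : |a| ⊓ |b| = 0 := by
      apply aux_sums_disjoint
      intro i hi j hj
      exact hx i j fun hij => (Finset.mem_sdiff.mp hj).2 (hij ▸ hi)
    have hsum := hest a b hdisj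
    rw [hab] at hsum
    rcases le_total ‖a‖ ‖b‖ with h | h
    · obtain ⟨i, hit, hi⟩ := ih t htcard
      refine ⟨i, hts hit, ?_⟩
      calc ‖x i‖ ≤ (c / 2) ^ k * ‖a‖ := hi
        _ ≤ (c / 2) ^ k * (c / 2 * ‖∑ j ∈ s, x j‖) := by
            apply mul_le_mul_of_nonneg_left _ (by positivity)
            rw [div_mul_eq_mul_div, le_div_iff₀ (by norm_num : (0:ℝ) < 2)]
            linarith
        _ = (c / 2) ^ (k + 1) * ‖∑ j ∈ s, x j‖ := by ring
    · obtain ⟨i, hit, hi⟩ := ih (s \ t) hucard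
      refine ⟨i, (Finset.mem_sdiff.mp hit).1, ?_⟩
      calc ‖x i‖ ≤ (c / 2) ^ k * ‖b‖ := hi
        _ ≤ (c / 2) ^ k * (c / 2 * ‖∑ j ∈ s, x j‖) := by
            apply mul_le_mul_of_nonneg_left _ (by positivity)
            rw [div_mul_eq_mul_div, le_div_iff₀ (by norm_num : (0:ℝ) < 2)]
            linarith
        _ = (c / 2) ^ (k + 1) * ‖∑ j ∈ s, x j‖ := by ring

end Lat

/-- Let `X` be a Banach lattice and `0 < c < 2` a constant such that
`‖x‖ + ‖y‖ ≤ c‖x + y‖` for all disjoint `x, y`. Then, with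
`p = 2 log 2 / log (2/c)`, there is a constant `C > 0` such that for every
`m ≥ 1` and every pairwise disjoint family `(xᵢ)_{i < m}`,
`⨅ i, ‖xᵢ‖ ≤ (C / m^(1/p)) ‖∑ xᵢ‖`. -/
theorem iInf_norm_le_div_rpow_mul_norm_sum {X : Type*} [NormedAddCommGroup X] [Lattice X]
    [HasSolidNorm X] [IsOrderedAddMonoid X]
    [CompleteSpace X] (c : ℝ) (hc0 : 0 < c) (hc2 : c < 2)
    (hest : ∀ x y : X, |x| ⊓ |y| = 0 → ‖x‖ + ‖y‖ ≤ c * ‖x + y‖) :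
    ∃ C > (0 : ℝ), ∀ (m : ℕ), 1 ≤ m → ∀ x : Fin m → X,
      (Pairwise fun i j => |x i| ⊓ |x j| = 0) →
      ⨅ i, ‖x i‖ ≤
        C / (m : ℝ) ^ (1 / (2 * Real.log 2 / Real.log (2 / c))) * ‖∑ i, x i‖ := by
  have hbase : (1 : ℝ) < 2 / c := (one_lt_div hc0).mpr hc2
  have hbase0 : (0 : ℝ) < 2 / c := by linarith
  have hL : 0 < Real.log (2 / c) := Real.log_pos hbase
  have hlog2 : 0 < Real.log 2 := Real.log_pos one_lt_two
  set q : ℝ := 1 / (2 * Real.log 2 / Real.log (2 / c)) with hq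
  have hq' : q = Real.log (2 / c) / (2 * Real.log 2) := by rw [hq, one_div_div]
  have hq0 : 0 < q := by rw [hq']; positivity
  refine ⟨c * (2 / c) ^ ((1 : ℝ) / 2), by positivity, ?_⟩
  intro m hm x hx
  set k := Nat.log 2 m with hk
  have h1 : 2 ^ k ≤ m := Nat.pow_log_le_self 2 (by omega)
  have h2 : m < 2 ^ (k + 1) := Nat.lt_pow_succ_log_self (by norm_num) m
  obtain ⟨s, -, hscard⟩ : ∃ s ⊆ (Finset.univ : Finset (Fin m)), s.card = 2 ^ k :=
    Finset.exists_subset_card_eq (by simpa using h1)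
  obtain ⟨i₀, hi₀s, hi₀⟩ := aux_key hc0 hest (fun i j hij => hx hij) k s hscard
  -- bound the partial sum by the full sum
  have hpart : ‖∑ j ∈ s, x j‖ ≤ c * ‖∑ i, x i‖ := by
    have hdisj : |∑ j ∈ s, x j| ⊓ |∑ j ∈ Finset.univ \ s, x j| = 0 := by
      apply aux_sums_disjoint
      intro i hi j hj
      exact hx fun hij => (Finset.mem_sdiff.mp hj).2 (hij ▸ hi)
    have hsum : (∑ j ∈ s, x j) + ∑ j ∈ Finset.univ \ s, x j = ∑ i, x i := by
      rw [add_comm, Finset.sum_sdiff (Finset.subset_univ s)]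
    have := hest _ _ hdisj
    rw [hsum] at this
    have := norm_nonneg (∑ j ∈ Finset.univ \ s, x j)
    linarith
  -- the numeric estimate
  have hnum : (c / 2) ^ k * c ≤ c * (2 / c) ^ ((1 : ℝ) / 2) / (m : ℝ) ^ q := by
    rw [le_div_iff₀ (by positivity : (0:ℝ) < (m : ℝ) ^ q)]
    have hmq : (m : ℝ) ^ q ≤ (2 / c) ^ ((k + 1 : ℝ) / 2) := by
      have hm2 : (m : ℝ) ≤ (2 : ℝ) ^ ((k + 1 : ℕ) : ℝ) := by
        rw [Real.rpow_natCast]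
        exact_mod_cast h2.le
      calc (m : ℝ) ^ q ≤ ((2 : ℝ) ^ ((k + 1 : ℕ) : ℝ)) ^ q :=
            Real.rpow_le_rpow (Nat.cast_nonneg m) hm2 hq0.le
        _ = (2 : ℝ) ^ (((k + 1 : ℕ) : ℝ) * q) := by
            rw [← Real.rpow_mul (by norm_num)]
        _ = (2 / c) ^ ((k + 1 : ℝ) / 2) := by
            rw [Real.rpow_def_of_pos (by norm_num : (0:ℝ) < 2),
              Real.rpow_def_of_pos hbase0]
            congr 1
            rw [hq']
            push_cast
            field_simp
    have hck : ((c / 2 : ℝ)) ^ k = (2 / c) ^ (-(k : ℝ)) := by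
      rw [Real.rpow_neg hbase0.le, Real.rpow_natCast, ← inv_pow, inv_div]
    calc (c / 2) ^ k * c * (m : ℝ) ^ q ≤ (2 / c) ^ (-(k : ℝ)) * c * (2 / c) ^ ((k + 1 : ℝ) / 2) := by
          rw [← hck]
          apply mul_le_mul_of_nonneg_left hmq (by positivity)
      _ = c * (2 / c) ^ (-(k : ℝ) + (k + 1 : ℝ) / 2) := by
          rw [Real.rpow_add hbase0]; ring
      _ ≤ c * (2 / c) ^ ((1 : ℝ) / 2) := by
          apply mul_le_mul_of_nonneg_left _ hc0.le
          apply Real.rpow_le_rpow_of_exponent_le hbase.le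
          have : (0 : ℝ) ≤ (k : ℝ) := Nat.cast_nonneg k
          linarith
  -- put everything together
  have hne : Nonempty (Fin m) := ⟨⟨0, by omega⟩⟩
  calc ⨅ i, ‖x i‖ ≤ ‖x i₀‖ :=
        ciInf_le ⟨0, fun r ⟨i, hi⟩ => hi ▸ norm_nonneg _⟩ i₀
    _ ≤ (c / 2) ^ k * ‖∑ j ∈ s, x j‖ := hi₀
    _ ≤ (c / 2) ^ k * (c * ‖∑ i, x i‖) :=
        mul_le_mul_of_nonneg_left hpart (by positivity)
    _ = ((c / 2) ^ k * c) * ‖∑ i, x i‖ := by ring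
    _ ≤ c * (2 / c) ^ ((1 : ℝ) / 2) / (m : ℝ) ^ q * ‖∑ i, x i‖ :=
        mul_le_mul_of_nonneg_right hnum (norm_nonneg _)
end
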